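/- Let G be a topological group and A a compact G-group with a presentation A = lim_r A_r as the inverse limit of an inverse system {A_r, φ_{rt}} over a directed poset R of compact Hausdorff G-groups with continuous G-equivariant transition homomorphisms, and let φ_r : A → A_r denote the natural projections. Then the map Θ : H¹_cts(G,A)_po → lim_r H¹_cts(G,A_r)_po given by [a] ↦ ([φ_r ∘ a])_r is a well-defined continuous bijection onto the inverse limit of the spaces H¹_cts(G,A_r)_po. In particular, if G is a compact Hausdorff space and A is evenly continuous with respect to G, then Θ is a homeomorphism. -/

import Mathlib

set_option linter.unusedSectionVars false
set_option maxHeartbeats 1000000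


/-- A set `F` of maps `B → A` is evenly continuous. -/
def EvenlyContinuousSet {B A : Type} [TopologicalSpace B] [TopologicalSpace A]
    (F : Set (B → A)) : Prop :=
  ∀ b : B, ∀ a : A, ∀ U ∈ nhds a, ∃ V ∈ nhds b, ∃ W ∈ nhds a,
    ∀ f ∈ F, f b ∈ W → ∀ v ∈ V, f v ∈ U

section Setup

variable {G : Type} [Group G] [TopologicalSpace G]
variable {R : Type} [PartialOrder R]
variable {Ar : R → Type} [∀ r, Group (Ar r)] [∀ r, TopologicalSpace (Ar r)]

/-- The inverse limit `A = {(x_r) ∈ ∏ A_r | φ_{rt}(x_r) = x_t}` of the system, with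
the subspace topology of the product topology (its group operations and `G`-action
are coordinatewise). -/
abbrev InvLim (φ : ∀ ⦃r t : R⦄, t ≤ r → Ar r → Ar t) : Type :=
  {x : ∀ r, Ar r // ∀ (r t : R) (h : t ≤ r), φ h (x r) = x t}

/-- `Z¹_cts(G, lim A_r)_po`: continuous 1-cocycles of `G` in the inverse limit,
the cocycle identity being stated coordinatewise (the limit's multiplication and
`G`-action are coordinatewise), with the point-open topology. -/
abbrev Z1Lim (acr : ∀ r, G → Ar r → Ar r) (φ : ∀ ⦃r t : R⦄, t ≤ r → Ar r → Ar t) :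
    Type :=
  {a : G → InvLim φ // Continuous a ∧
    ∀ (s t : G) (r : R), (a (s * t)).val r = (a s).val r * acr r s ((a t).val r)}

/-- The cohomology relation on `Z¹_cts(G, lim A_r)_po`. -/
def CohLim (acr : ∀ r, G → Ar r → Ar r) (φ : ∀ ⦃r t : R⦄, t ≤ r → Ar r → Ar t)
    (a b : Z1Lim acr φ) : Prop :=
  ∃ x : InvLim φ, ∀ (s : G) (r : R),
    (b.val s).val r = (x.val r)⁻¹ * (a.val s).val r * acr r s (x.val r)

/-- `Z¹_cts(G, A_r)_po` for an individual term of the system. -/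
abbrev Z1r (acr : ∀ r, G → Ar r → Ar r) (r : R) : Type :=
  {b : G → Ar r // Continuous b ∧ ∀ s t : G, b (s * t) = b s * acr r s (b t)}

/-- The cohomology relation on `Z¹_cts(G, A_r)_po`. -/
def Cohr (acr : ∀ r, G → Ar r → Ar r) (r : R) (b b' : Z1r acr r) : Prop :=
  ∃ x : Ar r, ∀ s : G, b'.val s = x⁻¹ * b.val s * acr r s x

end Setup

theorem mul_map_one' {A B : Type} [Group A] [Group B] (f : A → B)
    (hf : ∀ x y, f (x * y) = f x * f y) : f 1 = 1 := by
  have h := hf 1 1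
  rw [mul_one] at h
  exact left_eq_mul.mp h

theorem mul_map_inv' {A B : Type} [Group A] [Group B] (f : A → B)
    (hf : ∀ x y, f (x * y) = f x * f y) (x : A) : f x⁻¹ = (f x)⁻¹ := by
  have h : f x * f x⁻¹ = 1 := by rw [← hf, mul_inv_cancel, mul_map_one' f hf]
  exact (inv_eq_of_mul_eq_one_right h).symm

/-- Sections of an inverse system of nonempty compact subsets over a directed poset. -/
theorem exists_invlim_section {R : Type} [PartialOrder R] [IsDirected R (· ≤ ·)]
    {Z : R → Type} [∀ r, TopologicalSpace (Z r)] [∀ r, T2Space (Z r)]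
    (ψ : ∀ ⦃r t : R⦄, t ≤ r → Z r → Z t)
    (hψid : ∀ (r : R) (x : Z r), ψ (le_refl r) x = x)
    (hψcomp : ∀ (r t u : R) (h1 : u ≤ t) (h2 : t ≤ r) (x : Z r),
      ψ h1 (ψ h2 x) = ψ (h1.trans h2) x)
    (hψcont : ∀ (r t : R) (h : t ≤ r), Continuous (ψ h))
    (X : ∀ r, Set (Z r))
    (hXne : ∀ r, (X r).Nonempty) (hXc : ∀ r, IsCompact (X r))
    (hXmap : ∀ (r t : R) (h : t ≤ r), ∀ x ∈ X r, ψ h x ∈ X t) :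
    ∃ x : ∀ r, Z r, (∀ r, x r ∈ X r) ∧ ∀ (r t : R) (h : t ≤ r), ψ h (x r) = x t := by
  classical
  rcases isEmpty_or_nonempty R with hR | hR
  · exact ⟨fun r => isEmptyElim r, fun r => isEmptyElim r, fun r => isEmptyElim r⟩
  · set K : Set (∀ r, Z r) := {x | ∀ u, x u ∈ X u} with hK
    have hKeq : K = Set.pi Set.univ X := by
      ext x; simp [hK, Set.mem_pi]
    have hKc : IsCompact K := by rw [hKeq]; exact isCompact_univ_pi hXc
    have hKcl : IsClosed K := by
      rw [hKeq]; exact isClosed_set_pi fun a _ => (hXc a).isClosed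
    set D : R → Set (∀ r, Z r) :=
      fun r => K ∩ ⋂ (t : R), ⋂ (h : t ≤ r), {x | ψ h (x r) = x t} with hD
    have hDcl : ∀ r, IsClosed (D r) := by
      intro r
      refine hKcl.inter (isClosed_iInter fun t => isClosed_iInter fun h => ?_)
      exact isClosed_eq ((hψcont r t h).comp (continuous_apply r)) (continuous_apply t)
    have hDc : ∀ r, IsCompact (D r) :=
      fun r => hKc.of_isClosed_subset (hDcl r) Set.inter_subset_left
    have hDne : ∀ r, (D r).Nonempty := by
      intro r
      obtain ⟨y, hy⟩ := hXne r
      refine ⟨fun u => if h : u ≤ r then ψ h y else (hXne u).some, ?_, ?_⟩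
      · intro u
        by_cases h : u ≤ r
        · simpa [h] using hXmap r u h y hy
        · simpa [h] using (hXne u).some_mem
      · simp only [Set.mem_iInter, Set.mem_setOf_eq]
        intro t h
        simp [h, hψid]
    have hDdir : Directed (· ⊇ ·) D := by
      intro r₁ r₂
      obtain ⟨r₃, h1, h2⟩ := directed_of (· ≤ ·) r₁ r₂
      have key : ∀ (r : R) (h : r ≤ r₃), D r₃ ⊆ D r := by
        intro r h x hx
        obtain ⟨hxK, hxC⟩ := hx
        simp only [Set.mem_iInter, Set.mem_setOf_eq] at hxC
        refine ⟨hxK, ?_⟩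
        simp only [Set.mem_iInter, Set.mem_setOf_eq]
        intro t ht
        rw [← hxC r h, hψcomp, hxC t (ht.trans h)]
      exact ⟨r₃, key r₁ h1, key r₂ h2⟩
    obtain ⟨x, hx⟩ :=
      IsCompact.nonempty_iInter_of_directed_nonempty_isCompact_isClosed D hDdir hDne hDc hDcl
    simp only [Set.mem_iInter] at hx
    refine ⟨x, fun r => (hx r).1 r, fun r t h => ?_⟩
    have := (hx r).2
    simp only [Set.mem_iInter, Set.mem_setOf_eq] at this
    exact this t h

section Aux

variable {G : Type} [Group G] [TopologicalSpace G]
variable {R : Type} [PartialOrder R]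
variable {Ar : R → Type} [∀ r, Group (Ar r)] [∀ r, TopologicalSpace (Ar r)]
variable {acr : ∀ r, G → Ar r → Ar r}
variable {φ : ∀ ⦃r t : R⦄, t ≤ r → Ar r → Ar t}

theorem cohr_equiv
    (hdistr : ∀ r (s : G) (x y : Ar r), acr r s (x * y) = acr r s x * acr r s y)
    (r : R) : Equivalence (Cohr acr r) := by
  have h1 : ∀ s : G, acr r s (1 : Ar r) = 1 := fun s => mul_map_one' _ (hdistr r s)
  have hinv : ∀ (s : G) (x : Ar r), acr r s x⁻¹ = (acr r s x)⁻¹ :=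
    fun s x => mul_map_inv' _ (hdistr r s) x
  constructor
  · intro b; exact ⟨1, fun s => by rw [h1, inv_one, one_mul, mul_one]⟩
  · rintro b c ⟨x, hx⟩
    refine ⟨x⁻¹, fun s => ?_⟩
    rw [hx s, hinv]
    group
  · rintro a b c ⟨x, hx⟩ ⟨y, hy⟩
    refine ⟨x * y, fun s => ?_⟩
    rw [hy s, hx s, hdistr, mul_inv_rev]
    group

/-- Restriction of a limit cocycle to coordinate `r`. -/
def resZ (a : Z1Lim acr φ) (r : R) : Z1r acr r :=
  ⟨fun s => (a.val s).val r,
    (continuous_apply r).comp (continuous_subtype_val.comp a.prop.1),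
    fun s t => a.prop.2 s t r⟩

/-- Pushforward of a cocycle along a transition map. -/
def pushZ (hφcont : ∀ (r t : R) (h : t ≤ r), Continuous (φ h))
    (hφmul : ∀ (r t : R) (h : t ≤ r) (x y : Ar r), φ h (x * y) = φ h x * φ h y)
    (hφequiv : ∀ (r t : R) (h : t ≤ r) (s : G) (x : Ar r),
      φ h (acr r s x) = acr t s (φ h x))
    {r t : R} (hle : t ≤ r) (b : Z1r acr r) : Z1r acr t :=
  ⟨fun s => φ hle (b.val s), (hφcont r t hle).comp b.prop.1,
    fun s u => by simp only []; rw [b.prop.2 s u, hφmul, hφequiv]⟩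

end Aux

section Aux2

variable {G : Type} [Group G] [TopologicalSpace G]
variable {R : Type} [PartialOrder R]
variable {Ar : R → Type} [∀ r, Group (Ar r)] [∀ r, TopologicalSpace (Ar r)]
variable {acr : ∀ r, G → Ar r → Ar r}
variable {φ : ∀ ⦃r t : R⦄, t ≤ r → Ar r → Ar t}

theorem act_cocycle
    (hcompr : ∀ r (s t : G) (x : Ar r), acr r (s * t) x = acr r s (acr r t x))
    (hdistr : ∀ r (s : G) (x y : Ar r), acr r s (x * y) = acr r s x * acr r s y)
    {r : R} (b : Z1r acr r) (x : Ar r) (s t : G) :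
    x⁻¹ * b.val (s * t) * acr r (s * t) x =
      (x⁻¹ * b.val s * acr r s x) * acr r s (x⁻¹ * b.val t * acr r t x) := by
  rw [b.prop.2 s t, hcompr]
  simp only [hdistr, mul_map_inv' _ (hdistr r s)]
  group

/-- Right action of `Ar r` on `Z1r acr r`. -/
def actZ [IsTopologicalGroup G] [∀ r, IsTopologicalGroup (Ar r)]
    (hacr : ∀ r, Continuous fun p : G × Ar r => acr r p.1 p.2)
    (hcompr : ∀ r (s t : G) (x : Ar r), acr r (s * t) x = acr r s (acr r t x))
    (hdistr : ∀ r (s : G) (x y : Ar r), acr r s (x * y) = acr r s x * acr r s y)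
    {r : R} (b : Z1r acr r) (x : Ar r) : Z1r acr r :=
  ⟨fun s => x⁻¹ * b.val s * acr r s x,
    (continuous_const.mul b.prop.1).mul
      ((hacr r).comp (continuous_id.prodMk continuous_const)),
    fun s t => act_cocycle hcompr hdistr b x s t⟩

/-- The map `Θ`. -/
def ThetaFun [IsTopologicalGroup G] [∀ r, IsTopologicalGroup (Ar r)]
    (hdistr : ∀ r (s : G) (x y : Ar r), acr r s (x * y) = acr r s x * acr r s y)
    (hφcont : ∀ (r t : R) (h : t ≤ r), Continuous (φ h))
    (hφmul : ∀ (r t : R) (h : t ≤ r) (x y : Ar r), φ h (x * y) = φ h x * φ h y)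
    (hφequiv : ∀ (r t : R) (h : t ≤ r) (s : G) (x : Ar r),
      φ h (acr r s x) = acr t s (φ h x)) :
    Quot (CohLim acr φ) →
      {h : ∀ r, Quot (Cohr acr r) //
        ∀ (r t : R) (hle : t ≤ r) (b : Z1r acr r), h r = Quot.mk _ b →
          ∃ c : Z1r acr t, (∀ s : G, c.val s = φ hle (b.val s)) ∧
            h t = Quot.mk _ c} :=
  Quot.lift
    (fun a =>
      ⟨fun r => Quot.mk _ (resZ a r), by
        intro r t hle b hb
        have hrel : Cohr acr r (resZ a r) b :=
          ((cohr_equiv hdistr r).eqvGen_iff).mp (Quot.eqvGen_exact hb)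
        obtain ⟨x, hx⟩ := hrel
        refine ⟨pushZ hφcont hφmul hφequiv hle b, fun s => rfl, ?_⟩
        apply Quot.sound
        refine ⟨φ hle x, fun s => ?_⟩
        show φ hle (b.val s) = (φ hle x)⁻¹ * (a.val s).val t * acr t s (φ hle x)
        rw [hx s]
        show φ hle (x⁻¹ * (a.val s).val r * acr r s x) = _
        rw [hφmul, hφmul, mul_map_inv' _ (hφmul r t hle) x, hφequiv,
          (a.val s).prop r t hle]⟩)
    (by
      rintro a b ⟨x, hx⟩
      apply Subtype.ext
      funext r
      exact Quot.sound ⟨x.val r, fun s => hx s r⟩)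

variable [IsTopologicalGroup G] [∀ r, IsTopologicalGroup (Ar r)]

theorem theta_injective [IsDirected R (· ≤ ·)] [∀ r, T2Space (Ar r)]
    [∀ r, CompactSpace (Ar r)]
    (hacr : ∀ r, Continuous fun p : G × Ar r => acr r p.1 p.2)
    (hdistr : ∀ r (s : G) (x y : Ar r), acr r s (x * y) = acr r s x * acr r s y)
    (hφcont : ∀ (r t : R) (h : t ≤ r), Continuous (φ h))
    (hφid : ∀ r : R, φ (le_refl r) = id)
    (hφcomp : ∀ (r t u : R) (h1 : u ≤ t) (h2 : t ≤ r) (x : Ar r),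
      φ h1 (φ h2 x) = φ (h1.trans h2) x)
    (hφmul : ∀ (r t : R) (h : t ≤ r) (x y : Ar r), φ h (x * y) = φ h x * φ h y)
    (hφequiv : ∀ (r t : R) (h : t ≤ r) (s : G) (x : Ar r),
      φ h (acr r s x) = acr t s (φ h x)) :
    Function.Injective (ThetaFun (acr := acr) (φ := φ) hdistr hφcont hφmul hφequiv) := by
  intro p q
  induction p using Quot.ind with | _ a => ?_
  induction q using Quot.ind with | _ b => ?_
  intro hab
  have h1 : ∀ r, Cohr acr r (resZ a r) (resZ b r) := fun r =>
    ((cohr_equiv hdistr r).eqvGen_iff).mp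
      (Quot.eqvGen_exact (congrFun (congrArg Subtype.val hab) r))
  set X : ∀ r, Set (Ar r) := fun r =>
    {x | ∀ s : G, (b.val s).val r = x⁻¹ * (a.val s).val r * acr r s x} with hX
  have hXne : ∀ r, (X r).Nonempty := fun r => (h1 r).imp fun x hx => fun s => hx s
  have hXcl : ∀ r, IsClosed (X r) := by
    intro r
    have heq : X r = ⋂ s : G,
        {x : Ar r | (b.val s).val r = x⁻¹ * (a.val s).val r * acr r s x} := by
      ext x; simp [hX, Set.mem_iInter]
    rw [heq]
    refine isClosed_iInter fun s => isClosed_eq continuous_const ?_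
    exact (continuous_inv.mul continuous_const).mul
      ((hacr r).comp (continuous_const.prodMk continuous_id))
  have hXc : ∀ r, IsCompact (X r) := fun r => (hXcl r).isCompact
  have hXmap : ∀ (r t : R) (h : t ≤ r), ∀ x ∈ X r, φ h x ∈ X t := by
    intro r t hle x hx s
    have h2 := congrArg (φ hle) (hx s)
    rw [hφmul, hφmul, mul_map_inv' _ (hφmul r t hle) x, hφequiv,
      (a.val s).prop r t hle, (b.val s).prop r t hle] at h2
    exact h2
  obtain ⟨x, hmem, hcoh⟩ := exists_invlim_section φ (fun r y => by rw [hφid]; rfl)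
    hφcomp hφcont X hXne hXc hXmap
  exact Quot.sound ⟨⟨x, hcoh⟩, fun s r => hmem r s⟩

theorem theta_surjective [IsDirected R (· ≤ ·)] [∀ r, T2Space (Ar r)]
    [∀ r, CompactSpace (Ar r)]
    (hacr : ∀ r, Continuous fun p : G × Ar r => acr r p.1 p.2)
    (hcompr : ∀ r (s t : G) (x : Ar r), acr r (s * t) x = acr r s (acr r t x))
    (hdistr : ∀ r (s : G) (x y : Ar r), acr r s (x * y) = acr r s x * acr r s y)
    (hφcont : ∀ (r t : R) (h : t ≤ r), Continuous (φ h))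
    (hφid : ∀ r : R, φ (le_refl r) = id)
    (hφcomp : ∀ (r t u : R) (h1 : u ≤ t) (h2 : t ≤ r) (x : Ar r),
      φ h1 (φ h2 x) = φ (h1.trans h2) x)
    (hφmul : ∀ (r t : R) (h : t ≤ r) (x y : Ar r), φ h (x * y) = φ h x * φ h y)
    (hφequiv : ∀ (r t : R) (h : t ≤ r) (s : G) (x : Ar r),
      φ h (acr r s x) = acr t s (φ h x)) :
    Function.Surjective
      (ThetaFun (acr := acr) (φ := φ) hdistr hφcont hφmul hφequiv) := by
  classical
  intro h
  choose b hb using fun r => Quot.exists_rep (h.val r)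
  have hcompat : ∀ (r t : R) (hle : t ≤ r), ∃ y : Ar t,
      ∀ s, φ hle ((b r).val s) = y⁻¹ * (b t).val s * acr t s y := by
    intro r t hle
    obtain ⟨c, hc1, hc2⟩ := h.prop r t hle (b r) (hb r).symm
    have hrel : Cohr acr t (b t) c :=
      ((cohr_equiv hdistr t).eqvGen_iff).mp (Quot.eqvGen_exact ((hb t).trans hc2))
    obtain ⟨y, hy⟩ := hrel
    exact ⟨y, fun s => by rw [← hc1 s]; exact hy s⟩
  set X : ∀ r, Set (G → Ar r) := fun r =>
    {f | ∃ x : Ar r, ∀ s, f s = x⁻¹ * (b r).val s * acr r s x} with hX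
  have hXne : ∀ r, (X r).Nonempty := by
    intro r
    refine ⟨(b r).val, 1, fun s => ?_⟩
    rw [inv_one, one_mul, mul_map_one' _ (hdistr r s), mul_one]
  have hXc : ∀ r, IsCompact (X r) := by
    intro r
    have heq : X r = Set.range fun x : Ar r =>
        (fun s => x⁻¹ * (b r).val s * acr r s x : G → Ar r) := by
      ext f
      simp only [hX, Set.mem_setOf_eq, Set.mem_range, funext_iff, eq_comm]
    rw [heq]
    apply isCompact_range
    refine continuous_pi fun s => ?_
    exact (continuous_inv.mul continuous_const).mul
      ((hacr r).comp (continuous_const.prodMk continuous_id))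
  have hXmap : ∀ (r t : R) (hle : t ≤ r),
      ∀ f ∈ X r, (fun s => φ hle (f s)) ∈ X t := by
    rintro r t hle f ⟨x, hx⟩
    obtain ⟨y, hy⟩ := hcompat r t hle
    refine ⟨y * φ hle x, fun s => ?_⟩
    show φ hle (f s) = _
    rw [hx s, hφmul, hφmul, mul_map_inv' _ (hφmul r t hle) x, hφequiv, hy s,
      hdistr, mul_inv_rev]
    group
  obtain ⟨f, hfmem, hfcoh⟩ := exists_invlim_section
    (Z := fun r => G → Ar r)
    (fun r t hle g => fun s => φ hle (g s))
    (fun r g => by funext s; show φ (le_refl r) (g s) = g s; rw [hφid]; rfl)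
    (fun r t u h1 h2 g => by funext s; show φ h1 (φ h2 (g s)) = φ (h1.trans h2) (g s); exact hφcomp r t u h1 h2 (g s))
    (fun r t hle => continuous_pi fun s => (hφcont r t hle).comp (continuous_apply s))
    X hXne hXc hXmap
  simp only [hX, Set.mem_setOf_eq] at hfmem
  choose xw hxw using hfmem
  have hfcont : ∀ r, Continuous (f r) := by
    intro r
    have : f r = fun s => (xw r)⁻¹ * (b r).val s * acr r s (xw r) := funext (hxw r)
    rw [this]
    exact (continuous_const.mul (b r).prop.1).mul
      ((hacr r).comp (continuous_id.prodMk continuous_const))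
  set a : Z1Lim acr φ :=
    ⟨fun s => ⟨fun r => f r s, fun r t hle => congrFun (hfcoh r t hle) s⟩,
      Continuous.subtype_mk (continuous_pi fun r => hfcont r) _,
      by
        intro s t r
        show f r (s * t) = f r s * acr r s (f r t)
        rw [hxw r (s * t), hxw r s, hxw r t]
        exact act_cocycle hcompr hdistr (b r) (xw r) s t⟩ with ha
  refine ⟨Quot.mk _ a, ?_⟩
  apply Subtype.ext
  funext r
  show Quot.mk _ (resZ a r) = h.val r
  rw [← hb r]
  refine (Quot.sound ?_).symm
  exact ⟨xw r, fun s => hxw r s⟩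

theorem theta_cont
    (hdistr : ∀ r (s : G) (x y : Ar r), acr r s (x * y) = acr r s x * acr r s y)
    (hφcont : ∀ (r t : R) (h : t ≤ r), Continuous (φ h))
    (hφmul : ∀ (r t : R) (h : t ≤ r) (x y : Ar r), φ h (x * y) = φ h x * φ h y)
    (hφequiv : ∀ (r t : R) (h : t ≤ r) (s : G) (x : Ar r),
      φ h (acr r s x) = acr t s (φ h x)) :
    Continuous (ThetaFun (acr := acr) (φ := φ) hdistr hφcont hφmul hφequiv) := by
  unfold ThetaFun
  apply continuous_quot_lift
  apply Continuous.subtype_mk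
  apply continuous_pi
  intro r
  refine continuous_quot_mk.comp (Continuous.subtype_mk ?_ _)
  refine continuous_pi fun s => ?_
  exact (continuous_apply r).comp
    (continuous_subtype_val.comp ((continuous_apply s).comp continuous_subtype_val))

/-- Pointwise closedness of the set of continuous maps, given even continuity. -/
theorem continuous_isClosed {B A : Type} [TopologicalSpace B] [TopologicalSpace A]
    [RegularSpace A]
    (hec : ∀ b : B, ∀ a : A, ∀ U ∈ nhds a, ∃ V ∈ nhds b, ∃ W ∈ nhds a,
      ∀ f : B → A, Continuous f → f b ∈ W → ∀ v ∈ V, f v ∈ U) :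
    IsClosed {f : B → A | Continuous f} := by
  apply isClosed_of_closure_subset
  intro g hg
  show Continuous g
  rw [continuous_iff_continuousAt]
  intro p
  rw [ContinuousAt, Filter.tendsto_def]
  intro U0 hU0
  obtain ⟨C, hCmem, hCcl, hCsub⟩ := exists_mem_nhds_isClosed_subset hU0
  obtain ⟨V, hV, W, hW, hVW⟩ := hec p (g p) C hCmem
  filter_upwards [hV] with v hv
  apply hCsub
  have hgvC : g v ∈ closure C := by
    rw [mem_closure_iff_nhds]
    intro N hN
    have hT : {f : B → A | f p ∈ W} ∩ {f | f v ∈ N} ∈ nhds g :=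
      Filter.inter_mem ((continuous_apply p).continuousAt.preimage_mem_nhds hW)
        ((continuous_apply v).continuousAt.preimage_mem_nhds hN)
    obtain ⟨f, ⟨hfp, hfv⟩, hfF⟩ := mem_closure_iff_nhds.mp hg _ hT
    exact ⟨f v, hfv, hVW f hfF hfp v hv⟩
  rwa [hCcl.closure_eq] at hgvC

theorem quot_cohr_t2 [∀ r, T2Space (Ar r)] [∀ r, CompactSpace (Ar r)]
    (hacr : ∀ r, Continuous fun p : G × Ar r => acr r p.1 p.2)
    (hcompr : ∀ r (s t : G) (x : Ar r), acr r (s * t) x = acr r s (acr r t x))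
    (hdistr : ∀ r (s : G) (x y : Ar r), acr r s (x * y) = acr r s x * acr r s y)
    (r : R) : T2Space (Quot (Cohr acr r)) := by
  have hequiv := cohr_equiv (acr := acr) hdistr r
  have hRcl : IsClosed {z : Z1r acr r × Z1r acr r | Cohr acr r z.1 z.2} := by
    have hEcl : IsClosed (⋂ s : G, {w : (Z1r acr r × Z1r acr r) × Ar r |
        w.1.2.val s = w.2⁻¹ * w.1.1.val s * acr r s w.2}) := by
      refine isClosed_iInter fun s => isClosed_eq ?_ ?_
      · exact (continuous_apply s).comp
          (continuous_subtype_val.comp (continuous_snd.comp continuous_fst))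
      · exact ((continuous_snd.inv).mul ((continuous_apply s).comp
          (continuous_subtype_val.comp (continuous_fst.comp continuous_fst)))).mul
          ((hacr r).comp (continuous_const.prodMk continuous_snd))
    have himg : {z : Z1r acr r × Z1r acr r | Cohr acr r z.1 z.2} =
        Prod.fst '' (⋂ s : G, {w : (Z1r acr r × Z1r acr r) × Ar r |
          w.1.2.val s = w.2⁻¹ * w.1.1.val s * acr r s w.2}) := by
      ext z
      simp only [Set.mem_setOf_eq, Set.mem_image, Set.mem_iInter, Set.mem_setOf_eq]
      constructor
      · rintro ⟨x, hx⟩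
        exact ⟨(z, x), fun s => hx s, rfl⟩
      · rintro ⟨w, hw, hwz⟩
        exact ⟨w.2, fun s => by rw [← hwz]; exact hw s⟩
    rw [himg]
    exact isClosedMap_fst_of_compactSpace _ hEcl
  have hsat : ∀ O : Set (Z1r acr r), IsOpen O →
      IsOpen (Quot.mk (Cohr acr r) '' O) := by
    intro O hO
    rw [← isQuotientMap_quot_mk.isOpen_preimage]
    have hpre : Quot.mk (Cohr acr r) ⁻¹' (Quot.mk (Cohr acr r) '' O) =
        ⋃ x : Ar r, (fun c => actZ hacr hcompr hdistr c x) ⁻¹' O := by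
      ext c
      simp only [Set.mem_preimage, Set.mem_image, Set.mem_iUnion]
      constructor
      · rintro ⟨u, hu, hq⟩
        have hrel : Cohr acr r u c :=
          hequiv.eqvGen_iff.mp (Quot.eqvGen_exact hq)
        obtain ⟨x, hx⟩ := hrel
        refine ⟨x⁻¹, ?_⟩
        have heq : actZ hacr hcompr hdistr c x⁻¹ = u := by
          apply Subtype.ext; funext s
          show (x⁻¹)⁻¹ * c.val s * acr r s x⁻¹ = u.val s
          rw [hx s, mul_map_inv' _ (hdistr r s), inv_inv]
          group
        exact heq ▸ hu
      · rintro ⟨x, hx⟩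
        refine ⟨actZ hacr hcompr hdistr c x, hx, ?_⟩
        apply Quot.sound
        refine ⟨x⁻¹, fun s => ?_⟩
        show c.val s = (x⁻¹)⁻¹ * (x⁻¹ * c.val s * acr r s x) * acr r s x⁻¹
        rw [mul_map_inv' _ (hdistr r s), inv_inv]
        group
    rw [hpre]
    refine isOpen_iUnion fun x => IsOpen.preimage ?_ hO
    refine Continuous.subtype_mk (continuous_pi fun s => ?_) _
    exact (continuous_const.mul
      ((continuous_apply s).comp continuous_subtype_val)).mul continuous_const
  constructor
  intro p q hpq
  induction p using Quot.ind with | _ b => ?_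
  induction q using Quot.ind with | _ c => ?_
  have hmem : (b, c) ∈ {z : Z1r acr r × Z1r acr r | Cohr acr r z.1 z.2}ᶜ :=
    fun hbc => hpq (Quot.sound hbc)
  obtain ⟨U, V, hU, hV, hbU, hcV, hUV⟩ :=
    isOpen_prod_iff.mp hRcl.isOpen_compl b c hmem
  refine ⟨_, _, hsat U hU, hsat V hV, ⟨b, hbU, rfl⟩, ⟨c, hcV, rfl⟩, ?_⟩
  rw [Set.disjoint_left]
  rintro p ⟨u, hu, hqu⟩ ⟨v, hv, hqv⟩
  have hrel : Cohr acr r u v :=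
    hequiv.eqvGen_iff.mp (Quot.eqvGen_exact (hqu.trans hqv.symm))
  exact hUV (Set.mk_mem_prod hu hv) hrel

/-- Let `G` be a topological group and `A` a compact `G`-group with a
presentation `A = lim_r A_r` as inverse limit of compact Hausdorff `G`-groups with
continuous `G`-equivariant transition homomorphisms.  Then
`Θ : H¹_cts(G,A)_po → lim_r H¹_cts(G,A_r)_po`, `[a] ↦ ([φ_r ∘ a])_r`, is a
well-defined continuous bijection; if moreover `G` is compact Hausdorff and `A` is
evenly continuous with respect to `G`, then `Θ` is a homeomorphism. -/
theorem stmt_10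
    {G : Type} [Group G] [TopologicalSpace G] [IsTopologicalGroup G]
    {R : Type} [PartialOrder R] [IsDirected R (· ≤ ·)]
    (Ar : R → Type) [∀ r, Group (Ar r)] [∀ r, TopologicalSpace (Ar r)]
    [∀ r, IsTopologicalGroup (Ar r)] [∀ r, T2Space (Ar r)] [∀ r, CompactSpace (Ar r)]
    (acr : ∀ r, G → Ar r → Ar r)
    (hacr : ∀ r, Continuous fun p : G × Ar r => acr r p.1 p.2)
    (honer : ∀ r (x : Ar r), acr r 1 x = x)
    (hcompr : ∀ r (s t : G) (x : Ar r), acr r (s * t) x = acr r s (acr r t x))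
    (hdistr : ∀ r (s : G) (x y : Ar r), acr r s (x * y) = acr r s x * acr r s y)
    (φ : ∀ ⦃r t : R⦄, t ≤ r → Ar r → Ar t)
    (hφcont : ∀ (r t : R) (h : t ≤ r), Continuous (φ h))
    (hφid : ∀ r : R, φ (le_refl r) = id)
    (hφcomp : ∀ (r t u : R) (h1 : u ≤ t) (h2 : t ≤ r) (x : Ar r),
      φ h1 (φ h2 x) = φ (h1.trans h2) x)
    (hφmul : ∀ (r t : R) (h : t ≤ r) (x y : Ar r), φ h (x * y) = φ h x * φ h y)
    (hφequiv : ∀ (r t : R) (h : t ≤ r) (s : G) (x : Ar r),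
      φ h (acr r s x) = acr t s (φ h x))
    -- `A` is a compact `G`-group
    (hAcomp : CompactSpace (InvLim φ)) :
    ∃ Θ : Quot (CohLim acr φ) →
        {h : ∀ r, Quot (Cohr acr r) //
          ∀ (r t : R) (hle : t ≤ r) (b : Z1r acr r), h r = Quot.mk _ b →
            ∃ c : Z1r acr t, (∀ s : G, c.val s = φ hle (b.val s)) ∧
              h t = Quot.mk _ c},
      -- `Θ` is given by `[a] ↦ ([φ_r ∘ a])_r` (well-definedness included)
      (∀ (a : Z1Lim acr φ) (r : R), ∃ c : Z1r acr r,
        (∀ s : G, c.val s = (a.val s).val r) ∧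
        (Θ (Quot.mk _ a)).val r = Quot.mk _ c) ∧
      -- `Θ` is a continuous bijection
      Continuous Θ ∧
      Function.Bijective Θ ∧
      -- homeomorphism under the additional hypotheses
      (CompactSpace G → T2Space G →
        EvenlyContinuousSet {f : G → InvLim φ | Continuous f} →
        IsHomeomorph Θ) := by

  classical
  refine ⟨ThetaFun (acr := acr) (φ := φ) hdistr hφcont hφmul hφequiv,
    fun a r => ⟨resZ a r, fun s => rfl, rfl⟩,
    theta_cont hdistr hφcont hφmul hφequiv,
    ⟨theta_injective hacr hdistr hφcont hφid hφcomp hφmul hφequiv,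
     theta_surjective hacr hcompr hdistr hφcont hφid hφcomp hφmul hφequiv⟩,
    ?_⟩
  intro hGc hGt2 hec
  haveI := hAcomp
  haveI : ∀ r, T2Space (Quot (Cohr acr r)) := fun r =>
    quot_cohr_t2 hacr hcompr hdistr r
  have hccl : IsClosed {a : G → InvLim φ | Continuous a} := by
    apply continuous_isClosed
    intro b a U hU
    obtain ⟨V, hV, W, hW, h⟩ := hec b a U hU
    exact ⟨V, hV, W, hW, fun f hf => h f hf⟩
  have hcocl : IsClosed {a : G → InvLim φ |
      ∀ (s t : G) (r : R), (a (s * t)).val r = (a s).val r * acr r s ((a t).val r)} := by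
    have heq : {a : G → InvLim φ |
        ∀ (s t : G) (r : R), (a (s * t)).val r = (a s).val r * acr r s ((a t).val r)} =
        ⋂ (s : G) (t : G) (r : R), {a : G → InvLim φ |
          (a (s * t)).val r = (a s).val r * acr r s ((a t).val r)} := by
      ext a; simp only [Set.mem_setOf_eq, Set.mem_iInter]
    rw [heq]
    refine isClosed_iInter fun s => isClosed_iInter fun t => isClosed_iInter fun r => ?_
    have e : ∀ u : G, Continuous fun a : G → InvLim φ => (a u).val r := fun u =>
      (continuous_apply r).comp (continuous_subtype_val.comp (continuous_apply u))
    refine isClosed_eq (e (s * t)) ?_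
    exact (e s).mul (((hacr r).comp (continuous_const.prodMk continuous_id)).comp (e t))
  have hScl : IsClosed {a : G → InvLim φ | Continuous a ∧
      ∀ (s t : G) (r : R), (a (s * t)).val r = (a s).val r * acr r s ((a t).val r)} := by
    rw [Set.setOf_and]
    exact hccl.inter hcocl
  haveI : CompactSpace (Z1Lim acr φ) := isCompact_iff_compactSpace.mp hScl.isCompact
  rw [isHomeomorph_iff_continuous_bijective]
  exact ⟨theta_cont hdistr hφcont hφmul hφequiv,
    theta_injective hacr hdistr hφcont hφid hφcomp hφmul hφequiv,
    theta_surjective hacr hcompr hdistr hφcont hφid hφcomp hφmul hφequiv⟩
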